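/- Let α ∈ [−1, 0) be a real number and N ≥ 1 a positive integer. Define the weight sequence w : ℕ → ℝ by w_k = N^α for 0 ≤ k ≤ N−1 and w_k = (k+1)^α for k ≥ N. Then for every k ∈ ℕ one has w_{k+1} ≥ (1 − 1/(N+1))^{−α} w_k, with equality when k = N−1; consequently, for every sequence (a_k)_{k≥0} of nonnegative reals, Σ_{k=0}^∞ w_{k+1} a_k ≥ (1 − 1/(N+1))^{−α} Σ_{k=0}^∞ w_k a_k. -/

import Mathlib

open scoped ENNReal

/-- For `α ∈ [-1, 0)` and `N ≥ 1`, the weights `w_k = N^α` for `k < N` and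
`w_k = (k+1)^α` for `k ≥ N` satisfy `w_{k+1} ≥ (1 - 1/(N+1))^{-α} w_k`, with equality at
`k = N - 1`; consequently `Σ w_{k+1} a_k ≥ (1 - 1/(N+1))^{-α} Σ w_k a_k` for all nonnegative
sequences `(a_k)`. -/
theorem weight_lower_bound_dirichlet_norm
    (α : ℝ) (hα1 : -1 ≤ α) (hα0 : α < 0) (N : ℕ) (hN : 1 ≤ N)
    (w : ℕ → ℝ)
    (hw : ∀ k : ℕ, w k = if k < N then (N : ℝ) ^ α else ((k : ℝ) + 1) ^ α) :
    (∀ k : ℕ, (1 - 1 / ((N : ℝ) + 1)) ^ (-α) * w k ≤ w (k + 1)) ∧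
    (w N = (1 - 1 / ((N : ℝ) + 1)) ^ (-α) * w (N - 1)) ∧
    (∀ a : ℕ → ℝ≥0∞,
      ENNReal.ofReal ((1 - 1 / ((N : ℝ) + 1)) ^ (-α)) * ∑' k : ℕ, ENNReal.ofReal (w k) * a k
        ≤ ∑' k : ℕ, ENNReal.ofReal (w (k + 1)) * a k) := by
  have hN0 : (0:ℝ) < N := by exact_mod_cast hN
  have hN1 : (0:ℝ) < (N:ℝ) + 1 := by linarith
  have hb : (1 - 1 / ((N : ℝ) + 1)) = (N:ℝ) / ((N:ℝ) + 1) := by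
    field_simp
    ring
  have hbpos : (0:ℝ) < 1 - 1 / ((N : ℝ) + 1) := by
    rw [hb]; positivity
  have hble : 1 - 1 / ((N : ℝ) + 1) ≤ 1 := by
    rw [hb]; rw [div_le_one hN1]; linarith
  set c : ℝ := (1 - 1 / ((N : ℝ) + 1)) ^ (-α) with hc
  have hcpos : 0 < c := Real.rpow_pos_of_pos hbpos _
  have hcle1 : c ≤ 1 := Real.rpow_le_one hbpos.le hble (by linarith)
  have hNα : (0:ℝ) < (N:ℝ) ^ α := Real.rpow_pos_of_pos hN0 _
  have hN1α : (0:ℝ) < ((N:ℝ) + 1) ^ α := Real.rpow_pos_of_pos hN1 _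
  -- equality fact : c * N^α = (N+1)^α
  have heq : c * (N:ℝ) ^ α = ((N:ℝ) + 1) ^ α := by
    rw [hc, hb, Real.div_rpow hN0.le hN1.le, Real.rpow_neg hN0.le, Real.rpow_neg hN1.le]
    field_simp
  -- main pointwise inequality
  have hmain : ∀ k : ℕ, c * w k ≤ w (k + 1) := by
    intro k
    rcases lt_trichotomy (k + 1) N with h | h | h
    · rw [hw k, hw (k + 1), if_pos h, if_pos (by omega)]
      nlinarith
    · rw [hw k, hw (k + 1), if_pos (by omega), if_neg (by omega)]
      push_cast [h] at *
      rw [heq]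
    · -- k ≥ N
      have hk : N ≤ k := by omega
      rw [hw k, hw (k + 1), if_neg (by omega), if_neg (by omega)]
      push_cast
      have h22 : ((k:ℝ) + 1 + 1) = (k:ℝ) + 2 := by ring
      rw [h22]
      have hk1 : (0:ℝ) < (k:ℝ) + 1 := by positivity
      have hk2 : (0:ℝ) < (k:ℝ) + 2 := by positivity
      have hkα : (0:ℝ) < ((k:ℝ) + 1) ^ α := Real.rpow_pos_of_pos hk1 _
      have hkα2 : (0:ℝ) < ((k:ℝ) + 2) ^ α := Real.rpow_pos_of_pos hk2 _
      have hkR : (k:ℝ) ≥ N := by exact_mod_cast hk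
      have hbase : (N:ℝ) / ((N:ℝ) + 1) ≤ ((k:ℝ) + 1) / ((k:ℝ) + 2) := by
        rw [div_le_div_iff₀ hN1 hk2]
        nlinarith
      have hcle : c ≤ (((k:ℝ) + 1) / ((k:ℝ) + 2)) ^ (-α) := by
        rw [hc, hb]
        exact Real.rpow_le_rpow (by positivity) hbase (by linarith)
      have hval : (((k:ℝ) + 1) / ((k:ℝ) + 2)) ^ (-α) = ((k:ℝ) + 2) ^ α / ((k:ℝ) + 1) ^ α := by
        rw [Real.div_rpow hk1.le hk2.le, Real.rpow_neg hk1.le, Real.rpow_neg hk2.le]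
        field_simp
      rw [hval] at hcle
      calc c * ((k:ℝ) + 1) ^ α ≤ (((k:ℝ) + 2) ^ α / ((k:ℝ) + 1) ^ α) * ((k:ℝ) + 1) ^ α :=
            mul_le_mul_of_nonneg_right hcle hkα.le
        _ = ((k:ℝ) + 2) ^ α := div_mul_cancel₀ _ hkα.ne'
  refine ⟨hmain, ?_, ?_⟩
  · rw [hw N, hw (N - 1), if_neg (by omega), if_pos (by omega), heq]
  · intro a
    rw [← ENNReal.tsum_mul_left]
    refine ENNReal.tsum_le_tsum fun k => ?_
    rw [← mul_assoc, ← ENNReal.ofReal_mul hcpos.le]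
    exact mul_le_mul_left (ENNReal.ofReal_le_ofReal (hmain k)) _
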